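/- The coefficient of the monomial ∏_{μ=1}^A z_μ^{μ−1−n_μ} in the simple polynomial P(n), for n satisfying n_μ ≤ μ−1 for all μ and n strictly increasing within each species block, is nonzero (equal, up to sign, to ∏_μ (μ−1)!/(μ−1−n_μ)! and possibly a combinatorial multiplicity, but in any case nonzero). -/

import Mathlib

open MvPolynomial

open scoped Classical

/-- The Vandermonde (Jastrow) polynomial `∏_{μ<ν} (z_μ - z_ν)` in `A` variables over `ℂ`. -/
noncomputable def vand (A : ℕ) : MvPolynomial (Fin A) ℂ :=
  ∏ p ∈ Finset.univ.filter (fun p : Fin A × Fin A => p.1 < p.2), (X p.1 - X p.2)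

/-- Application of the product of derivative operators `∏_μ ∂_μ^{n_μ}` to a polynomial. -/
noncomputable def pdPow {A : ℕ} (n : Fin A → ℕ) (P : MvPolynomial (Fin A) ℂ) :
    MvPolynomial (Fin A) ℂ :=
  (List.finRange A).foldr (fun μ Q => (fun Q' => pderiv μ Q')^[n μ] Q) P

/-- The index (0-based) at which the block of species `α` starts: `N_1 + ⋯ + N_{α-1}`. -/
def blockStart {M : ℕ} (N : Fin M → ℕ) (α : Fin M) : ℕ :=
  ∑ β ∈ Finset.univ.filter (fun β => β < α), N β

/-- Particle `μ` belongs to the block of species `α`. -/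
def inBlock {M : ℕ} (N : Fin M → ℕ) (α : Fin M) {A : ℕ} (μ : Fin A) : Prop :=
  blockStart N α ≤ (μ : ℕ) ∧ (μ : ℕ) < blockStart N α + N α

/-- Particles `μ` and `ν` belong to the same species block. -/
def sameBlock {M : ℕ} (N : Fin M → ℕ) {A : ℕ} (μ ν : Fin A) : Prop :=
  ∃ α, inBlock N α μ ∧ inBlock N α ν

/-- The simple polynomial `P(n) = ∑_{σ ∈ S_{N_1} × ⋯ × S_{N_M}} sgn(σ) ∏_μ ∂_μ^{n_{σ(μ)}} 𝒥`,
the sum running over permutations preserving each species block. -/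
noncomputable def simpleP {M A : ℕ} (N : Fin M → ℕ) (n : Fin A → ℕ) :
    MvPolynomial (Fin A) ℂ :=
  ∑ σ ∈ Finset.univ.filter (fun σ : Equiv.Perm (Fin A) => ∀ μ, sameBlock N μ (σ μ)),
    (Equiv.Perm.sign σ : ℤ) • pdPow (n ∘ σ) (vand A)

section Blocks
variable {M A : ℕ} (N : Fin M → ℕ)

lemma blockStart_add_le {α β : Fin M} (h : α < β) :
    blockStart N α + N α ≤ blockStart N β := by
  unfold blockStart
  have hα : α ∉ Finset.univ.filter (fun γ => γ < α) := by simp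
  have hsub : insert α (Finset.univ.filter (fun γ => γ < α)) ⊆
      Finset.univ.filter (fun γ => γ < β) := by
    intro γ hγ
    simp only [Finset.mem_insert, Finset.mem_filter, Finset.mem_univ, true_and] at *
    rcases hγ with rfl | hγ
    · exact h
    · exact hγ.trans h
  calc (∑ γ ∈ Finset.univ.filter (fun γ => γ < α), N γ) + N α
      = ∑ γ ∈ insert α (Finset.univ.filter (fun γ => γ < α)), N γ := by
        rw [Finset.sum_insert hα]; ring
    _ ≤ _ := Finset.sum_le_sum_of_subset hsub

lemma inBlock_unique {α β : Fin M} {μ : Fin A} (hα : inBlock N α μ) (hβ : inBlock N β μ) :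
    α = β := by
  by_contra hne
  rcases lt_or_gt_of_ne hne with h | h
  · have := blockStart_add_le N h
    obtain ⟨h1, h2⟩ := hα; obtain ⟨h3, h4⟩ := hβ
    omega
  · have := blockStart_add_le N h
    obtain ⟨h1, h2⟩ := hα; obtain ⟨h3, h4⟩ := hβ
    omega

lemma sameBlock_trans {x y z : Fin A} (h1 : sameBlock N x y) (h2 : sameBlock N y z) :
    sameBlock N x z := by
  obtain ⟨α, hα1, hα2⟩ := h1
  obtain ⟨β, hβ1, hβ2⟩ := h2
  exact ⟨α, hα1, (inBlock_unique N hβ1 hα2) ▸ hβ2⟩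

lemma exists_inBlock (hA : ∑ α, N α = A) (μ : Fin A) : ∃ α, inBlock N α μ := by
  have hM : 0 < M := by
    by_contra hM
    have hM0 : M = 0 := by omega
    subst hM0
    simp only [Finset.univ_eq_empty, Finset.sum_empty] at hA
    have := μ.isLt
    omega
  set F := Finset.univ.filter (fun α : Fin M => blockStart N α ≤ (μ : ℕ)) with hF
  have h0 : blockStart N ⟨0, hM⟩ = 0 := by
    unfold blockStart
    apply Finset.sum_eq_zero
    intro γ hγ
    simp only [Finset.mem_filter, Finset.mem_univ, true_and] at hγ
    exact absurd hγ (by simp [Fin.lt_def])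
  have hne : F.Nonempty := ⟨⟨0, hM⟩, by simp [hF, h0]⟩
  set α := F.max' hne with hα
  have hαF : α ∈ F := F.max'_mem hne
  have hα1 : blockStart N α ≤ (μ : ℕ) := by
    simpa [hF] using hαF
  refine ⟨α, hα1, ?_⟩
  by_contra hcon
  push_neg at hcon
  by_cases hsucc : (α : ℕ) + 1 < M
  · set α' : Fin M := ⟨(α : ℕ) + 1, hsucc⟩ with hα'
    have hbs : blockStart N α' = blockStart N α + N α := by
      unfold blockStart
      have : Finset.univ.filter (fun γ : Fin M => γ < α') =
          insert α (Finset.univ.filter (fun γ : Fin M => γ < α)) := by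
        ext γ
        simp only [Finset.mem_filter, Finset.mem_univ, true_and, Finset.mem_insert,
          Fin.lt_def, hα']
        constructor
        · intro h
          rcases Nat.lt_succ_iff_lt_or_eq.1 h with h | h
          · exact Or.inr h
          · exact Or.inl (Fin.ext h)
        · rintro (rfl | h) <;> omega
      rw [this, Finset.sum_insert (by simp)]
      ring
    have : α' ∈ F := by
      simp only [hF, Finset.mem_filter, Finset.mem_univ, true_and]
      omega
    have := F.le_max' α' this
    rw [← hα] at this
    simp only [Fin.le_def, hα'] at this
    omega
  · have hlast : (α : ℕ) + 1 = M := by have := α.isLt; omega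
    have hsplit : ∑ γ, N γ = blockStart N α + N α := by
      unfold blockStart
      rw [← Finset.sum_filter_add_sum_filter_not Finset.univ (fun γ => γ < α) N]
      congr 1
      have : Finset.univ.filter (fun γ : Fin M => ¬ γ < α) = {α} := by
        ext γ
        simp only [Finset.mem_filter, Finset.mem_univ, true_and, Finset.mem_singleton,
          Fin.lt_def, not_lt]
        constructor
        · intro h
          have := γ.isLt
          exact Fin.ext (by omega)
        · rintro rfl; omega
      rw [this, Finset.sum_singleton]
    rw [hA] at hsplit
    have := μ.isLt
    omega

end Blocks

section NLemmas

variable {M A : ℕ} {N : Fin M → ℕ} {n : Fin A → ℕ}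
lemma n_gap (h2 : ∀ μ ν : Fin A, sameBlock N μ ν → μ < ν → n μ < n ν) {α : Fin M} {x y : Fin A} (hx : inBlock N α x) (hy : inBlock N α y)
    (hxy : (x : ℕ) ≤ (y : ℕ)) : n x + ((y : ℕ) - (x : ℕ)) ≤ n y := by
  suffices H : ∀ k : ℕ, ∀ y : Fin A, inBlock N α y → (y : ℕ) = (x : ℕ) + k →
      n x + k ≤ n y by
    have := H ((y : ℕ) - (x : ℕ)) y hy (by omega)
    omega
  intro k
  induction k with
  | zero =>
    intro y hy hyv
    have : y = x := Fin.ext (by omega)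
    subst this
    omega
  | succ k ih =>
    intro y hy hyv
    have hlt : (x : ℕ) + k < A := by have := y.isLt; omega
    set y' : Fin A := ⟨(x : ℕ) + k, hlt⟩ with hy'
    have hy'B : inBlock N α y' := by
      obtain ⟨a1, a2⟩ := hx; obtain ⟨b1, b2⟩ := hy
      exact ⟨by simp [hy']; omega, by simp [hy']; omega⟩
    have hih := ih y' hy'B rfl
    have hlt2 : y' < y := by simp [Fin.lt_def, hy']; omega
    have := h2 y' y ⟨α, hy'B, hy⟩ hlt2
    omega

lemma g_antitone (h1 : ∀ μ, n μ ≤ (μ : ℕ)) (h2 : ∀ μ ν : Fin A, sameBlock N μ ν → μ < ν → n μ < n ν) {α : Fin M} {x y : Fin A} (hx : inBlock N α x) (hy : inBlock N α y)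
    (hxy : (x : ℕ) ≤ (y : ℕ)) : (y : ℕ) - n y ≤ (x : ℕ) - n x := by
  have := n_gap h2 hx hy hxy
  have := h1 x
  omega

/-- If σ is block-preserving and has no "bad pair", it preserves the levels of
`g μ = μ - n μ`. -/
lemma nobad_level (h1 : ∀ μ, n μ ≤ (μ : ℕ)) (h2 : ∀ μ ν : Fin A, sameBlock N μ ν → μ < ν → n μ < n ν) (σ : Equiv.Perm (Fin A)) (hσ : ∀ μ, sameBlock N μ (σ μ))
    (nb : ∀ x y : Fin A, sameBlock N x y → (y : ℕ) - n y < (x : ℕ) - n x →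
      n (σ x) ≤ n (σ y)) :
    ∀ μ, ((σ μ : ℕ)) - n (σ μ) = (μ : ℕ) - n μ := by
  intro μ0
  obtain ⟨α, hμ0, hσμ0⟩ := hσ μ0
  set g : Fin A → ℕ := fun x => (x : ℕ) - n x with hg
  set B : Finset (Fin A) := Finset.univ.filter (fun x => inBlock N α x) with hB
  have hmem : ∀ x, x ∈ B ↔ inBlock N α x := fun x => by simp [hB]
  have hmapsTo : ∀ x ∈ B, σ x ∈ B := by
    intro x hx
    obtain ⟨β, hb1, hb2⟩ := hσ x
    have : β = α := inBlock_unique N hb1 ((hmem x).1 hx)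
    exact (hmem _).2 (this ▸ hb2)
  have himB : Finset.image σ B = B := by
    apply Finset.eq_of_subset_of_card_le
    · intro z hz
      obtain ⟨w, hw, rfl⟩ := Finset.mem_image.1 hz
      exact hmapsTo w hw
    · rw [Finset.card_image_of_injective _ σ.injective]
  have hP : ∀ x ∈ B, ∀ y ∈ B, g y < g x → σ x < σ y := by
    intro x hx y hy hgt
    have hsb : sameBlock N x y := ⟨α, (hmem x).1 hx, (hmem y).1 hy⟩
    have hle : n (σ x) ≤ n (σ y) := nb x y hsb hgt
    have hxy : x ≠ y := by rintro rfl; omega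
    have hne : σ x ≠ σ y := fun h => hxy (σ.injective h)
    have hσx : inBlock N α (σ x) := (hmem _).1 (hmapsTo x hx)
    have hσy : inBlock N α (σ y) := (hmem _).1 (hmapsTo y hy)
    rcases lt_trichotomy (σ x) (σ y) with h | h | h
    · exact h
    · exact absurd h hne
    · have := h2 (σ y) (σ x) ⟨α, hσy, hσx⟩ h
      omega
  have hS : ∀ c : ℕ, Finset.image σ (B.filter (fun x => c ≤ g x)) =
      B.filter (fun x => c ≤ g x) := by
    intro c
    set S := B.filter (fun x => c ≤ g x) with hSdef
    have hSB : S ⊆ B := Finset.filter_subset _ _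
    have hcard : (Finset.image σ S).card = S.card :=
      Finset.card_image_of_injective _ σ.injective
    have hsub : S ⊆ Finset.image σ S := by
      by_contra hns
      obtain ⟨z, hzS, hzni⟩ := Finset.not_subset.1 hns
      have hzB : z ∈ B := hSB hzS
      obtain ⟨w, hwB, hwz⟩ := Finset.mem_image.1 (himB ▸ hzB)
      have hwS : w ∉ S := fun hw => hzni (Finset.mem_image.2 ⟨w, hw, hwz⟩)
      have hnsub2 : ¬ Finset.image σ S ⊆ S := by
        intro hss
        have := Finset.eq_of_subset_of_card_le hss (by omega)
        exact hzni (this.symm ▸ hzS)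
      obtain ⟨z', hz'i, hz'S⟩ := Finset.not_subset.1 hnsub2
      obtain ⟨y, hyS, hyz'⟩ := Finset.mem_image.1 hz'i
      have hyB : y ∈ B := hSB hyS
      have hz'B : z' ∈ B := by
        rw [← hyz']; exact hmapsTo y hyB
      have hgy : c ≤ g y := (Finset.mem_filter.1 hyS).2
      have hgw : ¬ c ≤ g w := fun h => hwS (Finset.mem_filter.2 ⟨hwB, h⟩)
      have hlt1 : σ y < σ w := hP y hyB w hwB (by omega)
      rw [hyz', hwz] at hlt1
      -- z' < z, z ∈ S, z' ∈ B ⇒ z' ∈ S by downward closedness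
      have hgz : c ≤ g z := (Finset.mem_filter.1 hzS).2
      have hanti : g z ≤ g z' :=
        g_antitone h1 h2 ((hmem _).1 hz'B) ((hmem _).1 hzB) (le_of_lt hlt1)
      exact hz'S (Finset.mem_filter.2 ⟨hz'B, by omega⟩)
    exact ((Finset.eq_of_subset_of_card_le hsub (le_of_eq hcard)).symm)
  have hμ0B : μ0 ∈ B := (hmem _).2 hμ0
  have hin : σ μ0 ∈ B.filter (fun x => g μ0 ≤ g x) := by
    rw [← hS (g μ0)]
    exact Finset.mem_image_of_mem σ (Finset.mem_filter.2 ⟨hμ0B, le_refl _⟩)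
  have hge : g μ0 ≤ g (σ μ0) := (Finset.mem_filter.1 hin).2
  have hlt : ¬ (g μ0 + 1 ≤ g (σ μ0)) := by
    intro h
    have hmemS : σ μ0 ∈ B.filter (fun x => g μ0 + 1 ≤ g x) :=
      Finset.mem_filter.2 ⟨hmapsTo _ hμ0B, h⟩
    rw [← hS (g μ0 + 1)] at hmemS
    obtain ⟨y, hyS, hy⟩ := Finset.mem_image.1 hmemS
    have hyμ0 : y = μ0 := σ.injective hy
    subst hyμ0
    have := (Finset.mem_filter.1 hyS).2
    omega
  have : g (σ μ0) = g μ0 := by omega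
  simpa [hg] using this

end NLemmas

section Key

variable {M A : ℕ} {N : Fin M → ℕ} {n : Fin A → ℕ}

/-- weight of a permutation -/
def Wt (n : Fin A → ℕ) (σ : Equiv.Perm (Fin A)) : ℕ :=
  ∑ μ : Fin A, 2 ^ ((μ : ℕ) - n μ + n (σ μ))

lemma Wt_of_level (h1 : ∀ μ, n μ ≤ (μ : ℕ)) (σ : Equiv.Perm (Fin A))
    (hlev : ∀ μ, ((σ μ : ℕ)) - n (σ μ) = (μ : ℕ) - n μ) :
    Wt n σ = ∑ μ : Fin A, 2 ^ (μ : ℕ) := by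
  unfold Wt
  have : ∀ μ : Fin A, (μ : ℕ) - n μ + n (σ μ) = ((σ μ : ℕ)) := by
    intro μ
    have := h1 (σ μ)
    have := hlev μ
    omega
  rw [Finset.sum_congr rfl (fun μ _ => by rw [this μ])]
  exact Equiv.sum_comp σ (fun x => 2 ^ (x : ℕ))

lemma key (h1 : ∀ μ, n μ ≤ (μ : ℕ))
    (h2 : ∀ μ ν : Fin A, sameBlock N μ ν → μ < ν → n μ < n ν) :
    ∀ (w : ℕ) (σ : Equiv.Perm (Fin A)), Wt n σ ≤ w →
    (∀ μ, sameBlock N μ (σ μ)) →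
    (∀ μ, ((σ μ : ℕ)) - n (σ μ) = (μ : ℕ) - n μ) ∨ (∑ μ : Fin A, 2 ^ (μ : ℕ)) < Wt n σ := by
  intro w
  induction w with
  | zero =>
    intro σ hw hσ
    by_cases hbad : ∃ x y : Fin A, sameBlock N x y ∧ ((y : ℕ) - n y < (x : ℕ) - n x) ∧
        n (σ y) < n (σ x)
    · -- Wt n σ = 0 is impossible here (positive terms), derive contradiction
      exfalso
      obtain ⟨x, _, _, _⟩ := hbad
      have hx : x ∈ (Finset.univ : Finset (Fin A)) := Finset.mem_univ x
      have : 0 < Wt n σ := by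
        unfold Wt
        exact Finset.sum_pos' (fun i _ => Nat.zero_le _) ⟨x, hx, Nat.pow_pos (by norm_num)⟩
      omega
    · push_neg at hbad
      exact Or.inl (nobad_level h1 h2 σ hσ (fun x y hsb hgt => hbad x y hsb hgt))
  | succ w ih =>
    intro σ hw hσ
    by_cases hbad : ∃ x y : Fin A, sameBlock N x y ∧ ((y : ℕ) - n y < (x : ℕ) - n x) ∧
        n (σ y) < n (σ x)
    · right
      obtain ⟨x, y, hsb, hg, hn⟩ := hbad
      have hxy : x ≠ y := by rintro rfl; omega
      set σ' : Equiv.Perm (Fin A) := σ * Equiv.swap x y with hσ'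
      have hσ'x : σ' x = σ y := by simp [hσ', Equiv.swap_apply_left]
      have hσ'y : σ' y = σ x := by simp [hσ', Equiv.swap_apply_right]
      have hσ'o : ∀ z, z ≠ x → z ≠ y → σ' z = σ z := by
        intro z hzx hzy
        simp [hσ', Equiv.swap_apply_of_ne_of_ne hzx hzy]
      have hbp' : ∀ μ, sameBlock N μ (σ' μ) := by
        intro μ
        by_cases hμx : μ = x
        · subst hμx
          rw [hσ'x]
          exact sameBlock_trans N hsb (hσ y)
        by_cases hμy : μ = y
        · subst hμy
          rw [hσ'y]
          exact sameBlock_trans N ⟨(hsb.choose), hsb.choose_spec.2, hsb.choose_spec.1⟩ (hσ x)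
        · rw [hσ'o μ hμx hμy]
          exact hσ μ
      -- Wt n σ' < Wt n σ
      have hWlt : Wt n σ' < Wt n σ := by
        unfold Wt
        have hymem : y ∈ Finset.univ.erase x := Finset.mem_erase.2 ⟨Ne.symm hxy, Finset.mem_univ y⟩
        have hsplit : ∀ τ : Equiv.Perm (Fin A),
            ∑ μ : Fin A, 2 ^ ((μ : ℕ) - n μ + n (τ μ)) =
            2 ^ ((x : ℕ) - n x + n (τ x)) + (2 ^ ((y : ℕ) - n y + n (τ y)) +
              ∑ μ ∈ (Finset.univ.erase x).erase y, 2 ^ ((μ : ℕ) - n μ + n (τ μ))) := by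
          intro τ
          rw [← Finset.add_sum_erase _ _ (Finset.mem_univ x),
            ← Finset.add_sum_erase _ _ hymem]
        rw [hsplit σ, hsplit σ']
        have hrest : ∑ μ ∈ (Finset.univ.erase x).erase y, 2 ^ ((μ : ℕ) - n μ + n (σ' μ)) =
            ∑ μ ∈ (Finset.univ.erase x).erase y, 2 ^ ((μ : ℕ) - n μ + n (σ μ)) := by
          apply Finset.sum_congr rfl
          intro μ hμ
          have h₁ := (Finset.mem_erase.1 hμ).1
          have h₂ := (Finset.mem_erase.1 (Finset.mem_erase.1 hμ).2).1
          rw [hσ'o μ h₂ h₁]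
        rw [hrest, hσ'x, hσ'y]
        have hmain : 2 ^ ((x : ℕ) - n x + n (σ y)) + 2 ^ ((y : ℕ) - n y + n (σ x)) <
            2 ^ ((x : ℕ) - n x + n (σ x)) + 2 ^ ((y : ℕ) - n y + n (σ y)) := by
          rw [pow_add, pow_add, pow_add, pow_add]
          have ha : (2:ℕ) ^ ((y : ℕ) - n y) < 2 ^ ((x : ℕ) - n x) :=
            Nat.pow_lt_pow_right (by norm_num) hg
          have hc : (2:ℕ) ^ (n (σ y)) < 2 ^ (n (σ x)) :=
            Nat.pow_lt_pow_right (by norm_num) hn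
          have := mul_add_mul_lt_mul_add_mul ha hc
          -- this : a*d + b*c < a*c + b*d with a = 2^(gy), b = 2^(gx), c = 2^(nσy), d = 2^(nσx)
          omega
        omega
      have hWle : Wt n σ' ≤ w := by omega
      rcases ih σ' hWle hbp' with hlev | hlt
      · have := Wt_of_level h1 σ' hlev
        omega
      · omega
    · push_neg at hbad
      exact Or.inl (nobad_level h1 h2 σ hσ (fun x y hsb hgt => hbad x y hsb hgt))

/-- Core combinatorial lemma: if `μ ↦ μ - n μ + n (σ μ)` agrees with a permutation `τ`,
then `τ = σ`. -/
lemma core (h1 : ∀ μ, n μ ≤ (μ : ℕ))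
    (h2 : ∀ μ ν : Fin A, sameBlock N μ ν → μ < ν → n μ < n ν)
    (σ τ : Equiv.Perm (Fin A)) (hσ : ∀ μ, sameBlock N μ (σ μ))
    (hτ : ∀ μ, ((τ μ : ℕ)) = (μ : ℕ) - n μ + n (σ μ)) : τ = σ := by
  have hW : Wt n σ = ∑ μ : Fin A, 2 ^ (μ : ℕ) := by
    unfold Wt
    rw [Finset.sum_congr rfl (fun μ _ => by rw [← hτ μ])]
    exact Equiv.sum_comp τ (fun x => 2 ^ (x : ℕ))
  rcases key (N := N) h1 h2 (Wt n σ) σ le_rfl hσ with hlev | hlt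
  · ext μ
    have ha := hlev μ
    have hb := h1 (σ μ)
    have := hτ μ
    show ((τ μ : ℕ)) = ((σ μ : ℕ))
    omega
  · omega

end Key

noncomputable def Emap {A : ℕ} (τ : Equiv.Perm (Fin A)) : Fin A →₀ ℕ :=
  Finsupp.equivFunOnFinite.symm (fun i => (τ i : ℕ))

lemma Emap_apply {A : ℕ} (τ : Equiv.Perm (Fin A)) (i : Fin A) : Emap τ i = (τ i : ℕ) := rfl

lemma prod_X_pow_univ {A : ℕ} (s : Fin A →₀ ℕ) :
    (∏ j : Fin A, (X j : MvPolynomial (Fin A) ℂ) ^ s j) = monomial s 1 := by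
  rw [← prod_X_pow_eq_monomial]
  symm
  apply Finset.prod_subset (Finset.subset_univ _)
  intro x _ hx
  have : s x = 0 := Finsupp.notMem_support_iff.1 hx
  rw [this, pow_zero]

lemma vand_eq (A : ℕ) : vand A =
    ∑ τ : Equiv.Perm (Fin A),
      monomial (Emap τ)
        ((-1 : ℂ) ^ (Finset.univ.filter (fun p : Fin A × Fin A => p.1 < p.2)).card
          * ((Equiv.Perm.sign τ : ℤ) : ℂ)) := by
  classical
  have step1 : vand A =
      (-1 : MvPolynomial (Fin A) ℂ) ^ (Finset.univ.filter
        (fun p : Fin A × Fin A => p.1 < p.2)).card *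
      ∏ p ∈ Finset.univ.filter (fun p : Fin A × Fin A => p.1 < p.2), (X p.2 - X p.1) := by
    unfold vand
    rw [← Finset.prod_const, ← Finset.prod_mul_distrib]
    apply Finset.prod_congr rfl
    intro p _
    ring
  have step2 : ∏ p ∈ Finset.univ.filter (fun p : Fin A × Fin A => p.1 < p.2),
      ((X p.2 : MvPolynomial (Fin A) ℂ) - X p.1) =
      ∏ i : Fin A, ∏ j ∈ Finset.Ioi i, ((X j : MvPolynomial (Fin A) ℂ) - X i) := by
    rw [Finset.prod_sigma']
    symm
    apply Finset.prod_bij (fun (p : (_ : Fin A) × Fin A) _ => (p.1, p.2))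
    · rintro ⟨i, j⟩ hp
      simp only [Finset.mem_sigma, Finset.mem_univ, Finset.mem_Ioi, true_and] at hp
      simp [hp]
    · rintro ⟨i, j⟩ hij ⟨k, l⟩ hkl h
      simp only [Prod.mk.injEq] at h
      obtain ⟨h1, h2⟩ := h
      subst h1; subst h2; rfl
    · rintro ⟨i, j⟩ hp
      simp only [Finset.mem_filter, Finset.mem_univ, true_and] at hp
      exact ⟨⟨i, j⟩, by simp [hp], rfl⟩
    · rintro ⟨i, j⟩ _
      rfl
  have step3 : ∏ i : Fin A, ∏ j ∈ Finset.Ioi i, ((X j : MvPolynomial (Fin A) ℂ) - X i) =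
      Matrix.det (Matrix.vandermonde (fun i : Fin A => (X i : MvPolynomial (Fin A) ℂ))) :=
    (Matrix.det_vandermonde _).symm
  have step4 : Matrix.det (Matrix.vandermonde
        (fun i : Fin A => (X i : MvPolynomial (Fin A) ℂ))) =
      ∑ τ : Equiv.Perm (Fin A), ((Equiv.Perm.sign τ : ℤ) : MvPolynomial (Fin A) ℂ) *
        monomial (Emap τ) 1 := by
    rw [Matrix.det_apply]
    rw [← Equiv.sum_comp (Equiv.inv (Equiv.Perm (Fin A)))
      (fun τ => Equiv.Perm.sign τ • ∏ i : Fin A, Matrix.vandermonde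
        (fun i : Fin A => (X i : MvPolynomial (Fin A) ℂ)) (τ i) i)]
    apply Finset.sum_congr rfl
    intro τ _
    simp only [Equiv.inv_apply]
    rw [Equiv.Perm.sign_inv]
    have : ∏ i : Fin A, Matrix.vandermonde (fun i : Fin A => (X i : MvPolynomial (Fin A) ℂ))
        (τ⁻¹ i) i = monomial (Emap τ) 1 := by
      rw [← prod_X_pow_univ (Emap τ)]
      rw [← Equiv.prod_comp τ (fun i => Matrix.vandermonde
        (fun i : Fin A => (X i : MvPolynomial (Fin A) ℂ)) (τ⁻¹ i) i)]
      apply Finset.prod_congr rfl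
      intro j _
      simp [Matrix.vandermonde_apply, Emap_apply]
    rw [this, Units.smul_def, zsmul_eq_mul]
  rw [step1, step2, step3, step4, Finset.mul_sum]
  apply Finset.sum_congr rfl
  intro τ _
  have : ((-1 : MvPolynomial (Fin A) ℂ)) ^ (Finset.univ.filter
      (fun p : Fin A × Fin A => p.1 < p.2)).card = C ((-1 : ℂ) ^ (Finset.univ.filter
      (fun p : Fin A × Fin A => p.1 < p.2)).card) := by
    rw [map_pow, map_neg, map_one]
  rw [this]
  have h2 : ((Equiv.Perm.sign τ : ℤ) : MvPolynomial (Fin A) ℂ) =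
      C ((Equiv.Perm.sign τ : ℤ) : ℂ) := by rfl
  rw [h2, ← mul_assoc, ← map_mul, C_mul_monomial, mul_one]

section PdPow
variable {A : ℕ}

lemma iterate_pderiv_monomial (μ : Fin A) (k : ℕ) (e : Fin A →₀ ℕ) (c : ℂ) :
    (fun Q => pderiv μ Q)^[k] (monomial e c) =
      monomial (e - Finsupp.single μ k) (c * (e μ).descFactorial k) := by
  induction k with
  | zero => simp
  | succ k ih =>
    rw [Function.iterate_succ_apply', ih, pderiv_monomial]
    have he : e - Finsupp.single μ k - Finsupp.single μ 1 = e - Finsupp.single μ (k + 1) := by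
      rw [tsub_tsub, ← Finsupp.single_add]
    have happ : (e - Finsupp.single μ k) μ = e μ - k := by
      rw [Finsupp.tsub_apply, Finsupp.single_eq_same]
    rw [he, happ]
    congr 1
    rw [Nat.descFactorial_succ]
    push_cast
    ring

lemma foldr_pd_monomial (k : Fin A → ℕ) (l : List (Fin A)) (hl : l.Nodup) (e : Fin A →₀ ℕ)
    (c : ℂ) :
    l.foldr (fun μ Q => (fun Q' => pderiv μ Q')^[k μ] Q) (monomial e c) =
      monomial (e - ∑ μ ∈ l.toFinset, Finsupp.single μ (k μ))
        (c * ∏ μ ∈ l.toFinset, ((e μ).descFactorial (k μ) : ℂ)) := by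
  induction l with
  | nil => simp
  | cons μ t ih =>
    have hnd : t.Nodup := (List.nodup_cons.1 hl).2
    have hμt : μ ∉ t := (List.nodup_cons.1 hl).1
    have hμt' : μ ∉ t.toFinset := by simpa using hμt
    rw [List.foldr_cons, ih hnd, iterate_pderiv_monomial]
    have happ : (e - ∑ ν ∈ t.toFinset, Finsupp.single ν (k ν)) μ = e μ := by
      rw [Finsupp.tsub_apply]
      have : (∑ ν ∈ t.toFinset, Finsupp.single ν (k ν)) μ = 0 := by
        rw [Finsupp.finset_sum_apply]
        apply Finset.sum_eq_zero
        intro ν hν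
        exact Finsupp.single_eq_of_ne' (fun h => hμt' (h ▸ hν))
      rw [this]
      omega
    rw [happ]
    rw [List.toFinset_cons, Finset.sum_insert hμt', Finset.prod_insert hμt']
    congr 1
    · rw [tsub_tsub, add_comm (∑ ν ∈ t.toFinset, Finsupp.single ν (k ν))
        (Finsupp.single μ (k μ))]
    · ring

lemma pdPow_monomial (k : Fin A → ℕ) (e : Fin A →₀ ℕ) (c : ℂ) :
    pdPow k (monomial e c) =
      monomial (e - Finsupp.equivFunOnFinite.symm k)
        (c * ∏ μ : Fin A, ((e μ).descFactorial (k μ) : ℂ)) := by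
  unfold pdPow
  have hsum : (∑ μ : Fin A, Finsupp.single μ (k μ)) = Finsupp.equivFunOnFinite.symm k := by
    ext a
    rw [Finsupp.finset_sum_apply]
    rw [Finset.sum_eq_single a (fun ν _ hν => Finsupp.single_eq_of_ne' hν) (by simp)]
    simp
  rw [foldr_pd_monomial k _ (List.nodup_finRange A) e c, List.toFinset_finRange, hsum]

lemma pdPow_sum {ι : Type*} (k : Fin A → ℕ) (s : Finset ι) (f : ι → MvPolynomial (Fin A) ℂ) :
    pdPow k (∑ i ∈ s, f i) = ∑ i ∈ s, pdPow k (f i) := by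
  have hit : ∀ (μ : Fin A) (m : ℕ) (P Q : MvPolynomial (Fin A) ℂ),
      (fun Q' => pderiv μ Q')^[m] (P + Q) =
      (fun Q' => pderiv μ Q')^[m] P + (fun Q' => pderiv μ Q')^[m] Q := by
    intro μ m
    induction m with
    | zero => intro P Q; rfl
    | succ m ih =>
      intro P Q
      rw [Function.iterate_succ_apply', Function.iterate_succ_apply',
        Function.iterate_succ_apply', ih, map_add]
  have hz : ∀ (μ : Fin A) (m : ℕ), (fun Q' => pderiv μ Q')^[m] (0 : MvPolynomial (Fin A) ℂ) = 0 := by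
    intro μ m
    induction m with
    | zero => rfl
    | succ m ih => rw [Function.iterate_succ_apply', ih, map_zero]
  have hadd : ∀ P Q : MvPolynomial (Fin A) ℂ, pdPow k (P + Q) = pdPow k P + pdPow k Q := by
    intro P Q
    unfold pdPow
    induction (List.finRange A) with
    | nil => rfl
    | cons μ t ih => rw [List.foldr_cons, List.foldr_cons, List.foldr_cons, ih, hit]
  have hzero : pdPow k (0 : MvPolynomial (Fin A) ℂ) = 0 := by
    unfold pdPow
    induction (List.finRange A) with
    | nil => rfl
    | cons μ t ih => rw [List.foldr_cons, ih, hz]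
  classical
  induction s using Finset.induction_on with
  | empty => simpa using hzero
  | insert _ _ hns ih =>
    rw [Finset.sum_insert hns, Finset.sum_insert hns, hadd, ih]

end PdPow


/-- For `n` with `n_μ ≤ μ − 1` (0-based: `n μ ≤ μ`) and strictly increasing within each
species block, the coefficient of the monomial `∏_μ z_μ^{μ−1−n_μ}` in `P(n)` is
nonzero. -/
theorem simpleP_leading_coeff_ne_zero (M A : ℕ) (N : Fin M → ℕ) (hA : ∑ α, N α = A)
    (n : Fin A → ℕ) (h1 : ∀ μ, n μ ≤ (μ : ℕ))
    (h2 : ∀ μ ν : Fin A, sameBlock N μ ν → μ < ν → n μ < n ν) :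
    MvPolynomial.coeff (Finsupp.equivFunOnFinite.symm fun μ : Fin A => (μ : ℕ) - n μ)
      (simpleP N n) ≠ 0 := by
  classical
  set m : Fin A →₀ ℕ := Finsupp.equivFunOnFinite.symm fun μ : Fin A => (μ : ℕ) - n μ with hm
  set c : ℕ := (Finset.univ.filter (fun p : Fin A × Fin A => p.1 < p.2)).card with hc
  set F := Finset.univ.filter (fun σ : Equiv.Perm (Fin A) => ∀ μ, sameBlock N μ (σ μ)) with hF
  set D0 : ℕ := ∏ μ : Fin A, ((μ : ℕ)).descFactorial (n μ) with hD0
  have hsq : ∀ σ : Equiv.Perm (Fin A),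
      ((Equiv.Perm.sign σ : ℤ) : ℂ) * ((Equiv.Perm.sign σ : ℤ) : ℂ) = 1 := by
    intro σ
    rw [← Int.cast_mul, ← Units.val_mul, Int.units_mul_self]
    norm_num
  have hstep : ∀ σ : Equiv.Perm (Fin A), (∀ μ, sameBlock N μ (σ μ)) →
      MvPolynomial.coeff m (pdPow (n ∘ σ) (vand A)) =
      (if Emap σ - Finsupp.equivFunOnFinite.symm (n ∘ σ) = m
        then ((-1 : ℂ) ^ c * ((Equiv.Perm.sign σ : ℤ) : ℂ)) * (D0 : ℂ) else 0) := by
    intro σ hσ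
    rw [vand_eq, pdPow_sum, coeff_sum]
    have hterm : ∀ τ : Equiv.Perm (Fin A),
        MvPolynomial.coeff m (pdPow (n ∘ σ)
          (monomial (Emap τ) ((-1:ℂ)^c * ((Equiv.Perm.sign τ : ℤ):ℂ)))) =
        (if Emap τ - Finsupp.equivFunOnFinite.symm (n ∘ σ) = m
          then ((-1:ℂ)^c * ((Equiv.Perm.sign τ : ℤ):ℂ)) *
            ∏ μ : Fin A, (((τ μ : ℕ)).descFactorial (n (σ μ)) : ℂ) else 0) := by
      intro τ
      rw [pdPow_monomial, coeff_monomial]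
      simp only [Emap_apply, Function.comp_apply]
    rw [Finset.sum_congr rfl (fun τ _ => hterm τ)]
    rw [Finset.sum_eq_single σ]
    · have hprod : ∏ μ : Fin A, (((σ μ : ℕ)).descFactorial (n (σ μ)) : ℂ) = (D0 : ℂ) := by
        rw [hD0]
        push_cast
        exact Equiv.prod_comp σ (fun x => (((x : ℕ)).descFactorial (n x) : ℂ))
      split_ifs with h
      · rw [hprod]
      · rfl
    · intro τ _ hτσ
      by_contra hne
      have hcond : Emap τ - Finsupp.equivFunOnFinite.symm (n ∘ σ) = m := by
        by_contra h
        rw [if_neg h] at hne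
        exact hne rfl
      rw [if_pos hcond] at hne
      have hprodne : ∀ μ : Fin A, (((τ μ : ℕ)).descFactorial (n (σ μ)) : ℂ) ≠ 0 := by
        intro μ hzero
        apply hne
        rw [Finset.prod_eq_zero (Finset.mem_univ μ) hzero]
        ring
      have hge : ∀ μ : Fin A, n (σ μ) ≤ (τ μ : ℕ) := by
        intro μ
        have := hprodne μ
        rw [Nat.cast_ne_zero] at this
        have hlt : ¬ ((τ μ : ℕ)) < n (σ μ) :=
          fun hlt => this (Nat.descFactorial_eq_zero_iff_lt.2 hlt)
        omega
      have hτvals : ∀ μ : Fin A, ((τ μ : ℕ)) = (μ : ℕ) - n μ + n (σ μ) := by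
        intro μ
        have happ := congrFun (congrArg (fun f : Fin A →₀ ℕ => (f : Fin A → ℕ)) hcond) μ
        simp only [Finsupp.coe_tsub, Pi.sub_apply, Emap_apply, hm,
          Finsupp.coe_equivFunOnFinite_symm, Function.comp_apply] at happ
        have := hge μ
        have := h1 μ
        omega
      exact hτσ (core h1 h2 σ τ hσ hτvals)
    · intro h
      exact absurd (Finset.mem_univ σ) h
  have hterm2 : ∀ σ ∈ F,
      MvPolynomial.coeff m ((Equiv.Perm.sign σ : ℤ) • pdPow (n ∘ σ) (vand A)) =
      (if Emap σ - Finsupp.equivFunOnFinite.symm (n ∘ σ) = m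
        then ((-1 : ℂ) ^ c) * (D0 : ℂ) else 0) := by
    intro σ hσF
    have hσ : ∀ μ, sameBlock N μ (σ μ) := (Finset.mem_filter.1 hσF).2
    rw [MvPolynomial.coeff_smul, hstep σ hσ]
    split_ifs with h
    · rw [zsmul_eq_mul]
      linear_combination ((-1:ℂ)^c * (D0:ℂ)) * hsq σ
    · exact smul_zero _
  have hcoeff : MvPolynomial.coeff m (simpleP N n) =
      ((-1 : ℂ) ^ c) * ((∑ σ ∈ F, if Emap σ - Finsupp.equivFunOnFinite.symm (n ∘ σ) = m
        then D0 else 0 : ℕ) : ℂ) := by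
    rw [simpleP, coeff_sum, ← hF, Finset.sum_congr rfl hterm2]
    rw [Nat.cast_sum, Finset.mul_sum]
    apply Finset.sum_congr rfl
    intro σ _
    split_ifs with h
    · rfl
    · rw [Nat.cast_zero, mul_zero]
  rw [hcoeff]
  apply mul_ne_zero
  · exact pow_ne_zero _ (by norm_num)
  · rw [Nat.cast_ne_zero]
    have h1F : (1 : Equiv.Perm (Fin A)) ∈ F := by
      rw [hF, Finset.mem_filter]
      refine ⟨Finset.mem_univ _, fun μ => ?_⟩
      obtain ⟨α, hα⟩ := exists_inBlock N hA μ
      exact ⟨α, hα, by simpa using hα⟩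
    have hcond1 : Emap 1 - Finsupp.equivFunOnFinite.symm (n ∘ (1 : Equiv.Perm (Fin A))) = m := by
      ext μ
      rw [Finsupp.tsub_apply]
      simp [Emap_apply, hm]
    have hD0ne : D0 ≠ 0 := by
      rw [hD0, Finset.prod_ne_zero_iff]
      intro μ _
      rw [Ne, Nat.descFactorial_eq_zero_iff_lt, not_lt]
      exact h1 μ
    have hge := Finset.single_le_sum
      (f := fun σ : Equiv.Perm (Fin A) =>
        if Emap σ - Finsupp.equivFunOnFinite.symm (n ∘ σ) = m then D0 else 0)
      (fun i _ => Nat.zero_le _) h1F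
    simp only [if_pos hcond1] at hge
    omega
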